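/- Let S be a commutative ring and u, w ∈ S such that for every n ≥ 1 the image of w in S/uⁿS is a non-zero-divisor. Let (c_j)_{j≥0} be a sequence of elements of S such that: (a) the c_j tend to 0 u-adically, i.e. for every n there exists J with c_j ∈ uⁿS for every j ≥ J; and (b) w·c_{j−1} − c_j ∈ uʲS for every j ≥ 1. Then c_{j−1} ∈ uʲS for every j ≥ 1. -/

import Mathlib

/-- **Divisibility propagation along a `u`-adically null sequence.**
Let `S` be a commutative ring and `u, w ∈ S` such that for every `n ≥ 1` the image of
`w` in `S/uⁿS` is a non-zero-divisor.  Let `(c_j)` be a sequence in `S` tending to `0`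
`u`-adically and satisfying `w·c_{j−1} − c_j ∈ uʲS` for every `j ≥ 1`.  Then
`c_{j−1} ∈ uʲS` for every `j ≥ 1` (stated below with the index shift `j = k + 1`). -/
theorem mem_span_pow_of_tendsto_zero_of_rec
    {S : Type*} [CommRing S] (u w : S)
    (hw : ∀ n : ℕ, 1 ≤ n →
      Ideal.Quotient.mk (Ideal.span {u ^ n}) w ∈ nonZeroDivisors (S ⧸ Ideal.span {u ^ n}))
    (c : ℕ → S)
    (hc0 : ∀ n : ℕ, ∃ J : ℕ, ∀ j : ℕ, J ≤ j → c j ∈ Ideal.span {u ^ n})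
    (hrec : ∀ k : ℕ, w * c k - c (k + 1) ∈ Ideal.span {u ^ (k + 1)}) :
    ∀ k : ℕ, c k ∈ Ideal.span {u ^ (k + 1)} := by
  intro k
  set n := k + 1 with hn
  obtain ⟨J, hJ⟩ := hc0 n
  -- key: for all d and j with n ≤ j + 1 and J ≤ j + d, c j ∈ span {u ^ n}
  have key : ∀ d : ℕ, ∀ j : ℕ, n ≤ j + 1 → J ≤ j + d → c j ∈ Ideal.span {u ^ n} := by
    intro d
    induction d with
    | zero => intro j _ hj; exact hJ j hj
    | succ d ih =>
      intro j hnj hjd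
      by_cases hJj : J ≤ j
      · exact hJ j hJj
      · -- use c (j+1) ∈ span {u^n} and the recurrence
        have hc1 : c (j + 1) ∈ Ideal.span {u ^ n} := by
          apply ih (j + 1) (le_trans hnj (by omega)) (by omega)
        have hsub : w * c j - c (j + 1) ∈ Ideal.span {u ^ n} := by
          have := hrec j
          have hdvd : (u ^ n : S) ∣ u ^ (j + 1) := pow_dvd_pow u hnj
          rw [Ideal.mem_span_singleton] at this ⊢
          exact dvd_trans hdvd this
        have hwc : w * c j ∈ Ideal.span {u ^ n} := by
          have := Ideal.add_mem _ hsub hc1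
          simpa using this
        have hw' := hw n (by omega)
        have hzero : (Ideal.Quotient.mk (Ideal.span {u ^ n}) w) *
            (Ideal.Quotient.mk (Ideal.span {u ^ n}) (c j)) = 0 := by
          rw [← map_mul, Ideal.Quotient.eq_zero_iff_mem]
          exact hwc
        have := hw'.2 _ (by rw [mul_comm] at hzero; exact hzero)
        rwa [Ideal.Quotient.eq_zero_iff_mem] at this
  exact key J k (by omega) (by omega)
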